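/- Let N ≥ 1, let κ₁ > κ₂ > ⋯ > κ_N > 0 be real numbers, let ΔR₁, …, ΔR_{N+1} ≥ 0, and let Δκ ∈ ℝᴺ satisfy the constraint system Σ_{j=1}^N κⱼ^{2n}·Δκⱼ = (−1)ⁿ·ΔRₙ for n = 1, …, N. Then (−1)^N·Σ_{j=1}^N κⱼ^{2N+2}·Δκⱼ + ΔR_{N+1} = Σ_{n=1}^N e_{N−n+1}(κ₁², …, κ_N²)·ΔRₙ + ΔR_{N+1}; in particular this quantity is ≥ 0, and it is strictly positive if ΔRₙ > 0 for at least one n ∈ {1, …, N+1}. (This is the core computation of Proposition 4 showing ΔH_{N+1}(U_N) > 0, i.e. convexity of the Lyapunov functional at the N-soliton.) -/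
import Mathlib


open Finset

private theorem vieta_eval' (N : ℕ) (κ : Fin N → ℝ) (x : ℝ) :
    ∏ i, (x - κ i ^ 2) = ∑ k ∈ Finset.range (N + 1),
      (-1 : ℝ) ^ k * (∑ t ∈ univ.powersetCard k, ∏ i ∈ t, κ i ^ 2) * x ^ (N - k) := by
  have h := Multiset.prod_X_sub_X_eq_sum_esymm ((univ.val : Multiset (Fin N)).map (fun i => κ i ^ 2))
  have h2 := congrArg (Polynomial.eval x) h
  simp only [Multiset.map_map, Function.comp, Polynomial.eval_multiset_prod,
    Polynomial.eval_finset_sum, Polynomial.eval_mul, Polynomial.eval_pow, Polynomial.eval_sub,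
    Polynomial.eval_X, Polynomial.eval_C, Polynomial.eval_one, Polynomial.eval_neg,
    Multiset.card_map, Finset.esymm_map_val, ← Finset.card_def, Finset.card_univ,
    Fintype.card_fin] at h2
  rw [Finset.prod_eq_multiset_prod, h2]
  exact Finset.sum_congr rfl (fun k _ => by ring)

private theorem key_pow (N : ℕ) (κ : Fin N → ℝ) (j : Fin N) :
    (κ j ^ 2) ^ (N + 1) = ∑ k ∈ Finset.range N,
      (-1 : ℝ) ^ k * (∑ t ∈ univ.powersetCard (k + 1), ∏ i ∈ t, κ i ^ 2) * (κ j ^ 2) ^ (N - k) := by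
  set x := κ j ^ 2 with hxdef
  have h := vieta_eval' N κ x
  rw [Finset.prod_eq_zero (Finset.mem_univ j) (by ring), Finset.sum_range_succ'] at h
  simp only [pow_zero, one_mul, Nat.sub_zero, Finset.powersetCard_zero,
    Finset.sum_singleton, Finset.prod_empty, mul_one] at h
  have hsum : ∑ k ∈ Finset.range N,
      (-1 : ℝ) ^ (k + 1) * (∑ t ∈ univ.powersetCard (k + 1), ∏ i ∈ t, κ i ^ 2) * x ^ (N - (k + 1))
      = -x ^ N := by linarith
  calc x ^ (N + 1) = -x ^ N * (-x) := by rw [neg_mul_neg, ← pow_succ]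
    _ = (∑ k ∈ Finset.range N,
        (-1 : ℝ) ^ (k + 1) * (∑ t ∈ univ.powersetCard (k + 1), ∏ i ∈ t, κ i ^ 2)
          * x ^ (N - (k + 1))) * (-x) := by rw [hsum]
    _ = _ := by
        rw [Finset.sum_mul]
        refine Finset.sum_congr rfl (fun k hk => ?_)
        have hk' := Finset.mem_range.mp hk
        have h1 : N - k = (N - (k + 1)) + 1 := by omega
        rw [h1, pow_succ]
        ring


/-- Core computation of Proposition 4 (convexity of the Lyapunov functional at the
N-soliton). Let `κ₁ > … > κ_N > 0`, `ΔR₁, …, ΔR_{N+1} ≥ 0` and suppose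
`Σⱼ κⱼ^{2n} Δκⱼ = (−1)ⁿ ΔRₙ` for `n = 1, …, N`. Then
`(−1)^N Σⱼ κⱼ^{2N+2} Δκⱼ + ΔR_{N+1} = Σₙ e_{N−n+1}(κ²) ΔRₙ + ΔR_{N+1}`,
this quantity is nonnegative, and it is positive as soon as some `ΔRₙ > 0`.
Indices are zero-based: `n : Fin N` stands for the 1-based index `n+1`, and
`ΔR : Fin (N+1) → ℝ` with `ΔR i` standing for `ΔR_{i+1}`; the elementary symmetric
polynomial `e_k` is written as a sum over `k`-element subsets. -/
theorem convexity_of_lyapunov_functional (N : ℕ) (hN : 1 ≤ N)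
    (κ : Fin N → ℝ) (hκpos : ∀ j, 0 < κ j) (hκanti : StrictAnti κ)
    (ΔR : Fin (N + 1) → ℝ) (hΔR : ∀ i, 0 ≤ ΔR i)
    (Δκ : Fin N → ℝ)
    (hconstraint : ∀ n : Fin N,
      ∑ j, κ j ^ (2 * ((n : ℕ) + 1)) * Δκ j = (-1 : ℝ) ^ ((n : ℕ) + 1) * ΔR n.castSucc) :
    ((-1 : ℝ) ^ N * ∑ j, κ j ^ (2 * N + 2) * Δκ j + ΔR (Fin.last N) =
        (∑ n : Fin N,
          (∑ t ∈ univ.powersetCard (N - (n : ℕ)), ∏ i ∈ t, κ i ^ 2) * ΔR n.castSucc)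
          + ΔR (Fin.last N)) ∧
      0 ≤ (-1 : ℝ) ^ N * ∑ j, κ j ^ (2 * N + 2) * Δκ j + ΔR (Fin.last N) ∧
      ((∃ i, 0 < ΔR i) →
        0 < (-1 : ℝ) ^ N * ∑ j, κ j ^ (2 * N + 2) * Δκ j + ΔR (Fin.last N)) := by
  set E : ℕ → ℝ := fun k => ∑ t ∈ univ.powersetCard k, ∏ i ∈ t, κ i ^ 2 with hEdef
  -- Positivity of the elementary symmetric functions
  have hEpos : ∀ m, m ≤ N → 0 < E m := by
    intro m hm
    refine Finset.sum_pos (fun t _ => Finset.prod_pos (fun i _ => pow_pos (hκpos i) 2)) ?_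
    exact Finset.powersetCard_nonempty.2 (by simpa using hm)
  -- the key computation
  have hkey : ∀ j, κ j ^ (2 * N + 2) = ∑ k ∈ Finset.range N,
      (-1 : ℝ) ^ k * E (k + 1) * κ j ^ (2 * (N - k)) := by
    intro j
    have h := key_pow N κ j
    rw [show 2 * N + 2 = 2 * (N + 1) by ring, pow_mul, h]
    exact Finset.sum_congr rfl (fun k _ => by rw [pow_mul])
  have hmain : ∑ j, κ j ^ (2 * N + 2) * Δκ j = ∑ k ∈ Finset.range N,
      (-1 : ℝ) ^ N * (E (k + 1) * ΔR ((⟨N - k - 1, by omega⟩ : Fin N)).castSucc) := by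
    calc ∑ j, κ j ^ (2 * N + 2) * Δκ j
        = ∑ j, ∑ k ∈ Finset.range N, (-1 : ℝ) ^ k * E (k + 1) * κ j ^ (2 * (N - k)) * Δκ j := by
          refine Finset.sum_congr rfl (fun j _ => ?_)
          rw [hkey j, Finset.sum_mul]
      _ = ∑ k ∈ Finset.range N, ∑ j, (-1 : ℝ) ^ k * E (k + 1) * κ j ^ (2 * (N - k)) * Δκ j :=
          Finset.sum_comm
      _ = _ := by
          refine Finset.sum_congr rfl (fun k hk => ?_)
          have hk' := Finset.mem_range.mp hk
          have hcon := hconstraint ⟨N - k - 1, by omega⟩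
          simp only at hcon
          have hexp : N - k - 1 + 1 = N - k := by omega
          rw [hexp] at hcon
          calc ∑ j, (-1 : ℝ) ^ k * E (k + 1) * κ j ^ (2 * (N - k)) * Δκ j
              = (-1 : ℝ) ^ k * E (k + 1) * ∑ j, κ j ^ (2 * (N - k)) * Δκ j := by
                rw [Finset.mul_sum univ (fun j => κ j ^ (2 * (N - k)) * Δκ j)
                  ((-1 : ℝ) ^ k * E (k + 1))]
                exact Finset.sum_congr rfl (fun j _ => by ring)
            _ = (-1 : ℝ) ^ k * E (k + 1) * ((-1 : ℝ) ^ (N - k)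
                  * ΔR ((⟨N - k - 1, by omega⟩ : Fin N)).castSucc) := by rw [hcon]
            _ = (-1 : ℝ) ^ (k + (N - k)) * (E (k + 1)
                  * ΔR ((⟨N - k - 1, by omega⟩ : Fin N)).castSucc) := by
                rw [pow_add]; ring
            _ = _ := by rw [show k + (N - k) = N by omega]
  -- the identity
  have hiden : (-1 : ℝ) ^ N * ∑ j, κ j ^ (2 * N + 2) * Δκ j
      = ∑ n : Fin N, E (N - (n : ℕ)) * ΔR n.castSucc := by
    rw [hmain, Finset.mul_sum]
    have h1 : ∀ k ∈ Finset.range N,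
        (-1 : ℝ) ^ N * ((-1 : ℝ) ^ N * (E (k + 1) * ΔR ((⟨N - k - 1, by omega⟩ : Fin N)).castSucc))
        = E (k + 1) * ΔR ((⟨N - k - 1, by omega⟩ : Fin N)).castSucc := by
      intro k _
      rw [← mul_assoc, ← pow_add, Even.neg_one_pow ⟨N, rfl⟩, one_mul]
    rw [Finset.sum_congr rfl h1]
    refine Finset.sum_bij' (fun k hk => (⟨N - k - 1, by omega⟩ : Fin N))
      (fun n _ => N - (n : ℕ) - 1) (fun k _ => Finset.mem_univ _)
      (fun n _ => Finset.mem_range.2 (show N - (n : ℕ) - 1 < N by have := n.isLt; omega)) ?_ ?_ ?_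
    · intro k hk
      have := Finset.mem_range.mp hk
      simp only
      omega
    · intro n _
      have := n.isLt
      exact Fin.ext (by simp only; omega)
    · intro k hk
      have := Finset.mem_range.mp hk
      have h2 : N - (N - k - 1) = k + 1 := by omega
      simp only [h2]
  refine ⟨by rw [hiden], ?_, ?_⟩
  · rw [hiden]
    have h0 : 0 ≤ ∑ n : Fin N, E (N - (n : ℕ)) * ΔR n.castSucc :=
      Finset.sum_nonneg (fun n _ => mul_nonneg (hEpos _ (by omega)).le (hΔR _))
    linarith [hΔR (Fin.last N)]
  · rintro ⟨i, hi⟩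
    rw [hiden]
    have hnn : ∀ n ∈ (univ : Finset (Fin N)), 0 ≤ E (N - (n : ℕ)) * ΔR n.castSucc :=
      fun n _ => mul_nonneg (hEpos _ (by omega)).le (hΔR _)
    rcases Fin.eq_castSucc_or_eq_last i with ⟨n, rfl⟩ | rfl
    · have hpos : 0 < ∑ n : Fin N, E (N - (n : ℕ)) * ΔR n.castSucc :=
        Finset.sum_pos' hnn ⟨n, Finset.mem_univ n,
          mul_pos (hEpos _ (by omega)) hi⟩
      linarith [hΔR (Fin.last N)]
    · have h0 : 0 ≤ ∑ n : Fin N, E (N - (n : ℕ)) * ΔR n.castSucc := Finset.sum_nonneg hnn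
      linarith
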